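/- The delta functional at the origin is not a positive linear functional for the Moyal star product on ℝ^{2n}: for H = p²/(2m) + k q² with k, m > 0, one has (H ⋆_M H)(0,0) = −kλ²/(2m) < 0, even though H is real and H(0,0) = 0, so evaluation at the origin fails positivity δ₀(H̄ ⋆ H) ≥ 0. -/

import Mathlib

open MvPolynomial

/-- Iterated partial derivative along a list of coordinate directions. -/
noncomputable def iterD {m : ℕ} (r : List (Fin m)) (u : MvPolynomial (Fin m) ℂ) :
    MvPolynomial (Fin m) ℂ :=
  r.foldr (fun i w => pderiv i w) u

/-- The `k`-th Moyal bidifferential operator at `ν = iλ`. -/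
noncomputable def CkC {m : ℕ} (P : Fin m → Fin m → ℝ) (k : ℕ)
    (u v : MvPolynomial (Fin m) ℂ) : MvPolynomial (Fin m) ℂ :=
  ((Complex.I / 2) ^ k / (k.factorial : ℂ)) •
    ∑ r : Fin k → Fin m, ∑ s : Fin k → Fin m,
      ((∏ t, P (r t) (s t) : ℝ) : ℂ) • (iterD (List.ofFn r) u * iterD (List.ofFn s) v)

/-- The Moyal star product at `ν = iλ`, as formal power series in `λ`. -/
noncomputable def moyalC {m : ℕ} (P : Fin m → Fin m → ℝ)
    (u v : PowerSeries (MvPolynomial (Fin m) ℂ)) : PowerSeries (MvPolynomial (Fin m) ℂ) :=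
  PowerSeries.mk fun n => ∑ k ∈ Finset.range (n + 1), ∑ p ∈ Finset.HasAntidiagonal.antidiagonal (n - k),
    CkC P k (PowerSeries.coeff p.1 u) (PowerSeries.coeff p.2 v)

/-- Positivity for real `λ`-series: the lowest-order nonvanishing coefficient is positive. -/
def PosSeries (a : PowerSeries ℝ) : Prop :=
  ∃ n : ℕ, (∀ m < n, PowerSeries.coeff (R := ℝ) m a = 0) ∧ 0 < PowerSeries.coeff (R := ℝ) n a

/-- The canonical Poisson tensor on `ℝ²` (coordinates `(q,p)`). -/
def Pcan : Fin 2 → Fin 2 → ℝ := ![![0, 1], ![-1, 0]]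

lemma iterD_zero {m : ℕ} (r : List (Fin m)) : iterD r (0 : MvPolynomial (Fin m) ℂ) = 0 := by
  induction r with
  | nil => rfl
  | cons a l ih =>
    simp [iterD, List.foldr_cons] at ih ⊢
    rw [show (List.foldr (fun i w => pderiv i w) 0 l) = 0 from ih]; simp

lemma CkC_zero_left {m : ℕ} (P : Fin m → Fin m → ℝ) (k : ℕ) (v : MvPolynomial (Fin m) ℂ) :
    CkC P k 0 v = 0 := by
  simp [CkC, iterD_zero]

lemma CkC_zero_right {m : ℕ} (P : Fin m → Fin m → ℝ) (k : ℕ) (u : MvPolynomial (Fin m) ℂ) :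
    CkC P k u 0 = 0 := by
  simp [CkC, iterD_zero]

lemma coeff_moyal_CC {m : ℕ} (P : Fin m → Fin m → ℝ) (H K : MvPolynomial (Fin m) ℂ) (n : ℕ) :
    PowerSeries.coeff n (moyalC P (PowerSeries.C H) (PowerSeries.C K)) = CkC P n H K := by
  rw [moyalC, PowerSeries.coeff_mk]
  rw [Finset.sum_eq_single n]
  · simp [Finset.Nat.antidiagonal_zero]
  · intro k hk hne
    apply Finset.sum_eq_zero
    intro p hp
    have h1 : n - k ≠ 0 := by
      simp at hk
      omega
    rcases Finset.HasAntidiagonal.mem_antidiagonal.mp hp with h2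
    rcases Nat.eq_zero_or_pos p.1 with h3 | h3
    · have : p.2 ≠ 0 := by omega
      simp [PowerSeries.coeff_C, this, CkC_zero_right]
    · rw [PowerSeries.coeff_C, if_neg (by omega : ¬ p.1 = 0), CkC_zero_left]
  · intro h; simp at h

lemma iterD_cons {m : ℕ} (a : Fin m) (l : List (Fin m)) (u : MvPolynomial (Fin m) ℂ) :
    iterD (a :: l) u = pderiv a (iterD l u) := rfl

lemma pderiv_two {n : ℕ} (i : Fin n) : pderiv i (2 : MvPolynomial (Fin n) ℂ) = 0 := by
  rw [show (2 : MvPolynomial (Fin n) ℂ) = MvPolynomial.C 2 from (map_ofNat MvPolynomial.C 2).symm,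
    pderiv_C]

lemma three_deriv (a b : ℂ) (i j l : Fin 2) :
    pderiv i (pderiv j (pderiv l (MvPolynomial.C a * (X 1)^2 + MvPolynomial.C b * (X 0)^2))) = 0 := by
  fin_cases i <;> fin_cases j <;> fin_cases l <;> simp [pderiv_two]

lemma iterD_big (a b : ℂ) (l : List (Fin 2)) (hl : 3 ≤ l.length) :
    iterD l (MvPolynomial.C a * (X 1)^2 + MvPolynomial.C b * (X 0)^2) = 0 := by
  induction l with
  | nil => simp at hl
  | cons i l' ih =>
    rcases Nat.lt_or_ge l'.length 3 with h | h
    · have h2 : l'.length = 2 := by simp at hl; omega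
      obtain ⟨x, y, rfl⟩ := List.length_eq_two.mp h2
      have h3 : iterD [x, y] (MvPolynomial.C a * (X 1)^2 + MvPolynomial.C b * (X 0)^2)
          = pderiv x (pderiv y (MvPolynomial.C a * (X 1)^2 + MvPolynomial.C b * (X 0)^2)) := rfl
      rw [iterD_cons, h3, three_deriv]
    · rw [iterD_cons, ih h]
      simp

lemma CkC_big (P : Fin 2 → Fin 2 → ℝ) (a b : ℂ) (n : ℕ) (hn : 3 ≤ n) :
    CkC P n (MvPolynomial.C a * (X 1)^2 + MvPolynomial.C b * (X 0)^2)
      (MvPolynomial.C a * (X 1)^2 + MvPolynomial.C b * (X 0)^2) = 0 := by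
  rw [CkC]
  rw [Finset.sum_eq_zero, smul_zero]
  intro r _
  rw [Finset.sum_eq_zero]
  intro s _
  rw [iterD_big a b _ (by simp [hn]), zero_mul, smul_zero]

lemma sum_fn2 {M : Type*} [AddCommMonoid M] (f : (Fin 2 → Fin 2) → M) :
    ∑ r : Fin 2 → Fin 2, f r = f ![0,0] + f ![0,1] + (f ![1,0] + f ![1,1]) := by
  rw [← (finTwoArrowEquiv (Fin 2)).symm.sum_comp]
  rw [Fintype.sum_prod_type]
  simp [Fin.sum_univ_two, finTwoArrowEquiv, add_assoc]

lemma sum_fn1 {M : Type*} [AddCommMonoid M] (f : (Fin 1 → Fin 2) → M) :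
    ∑ r : Fin 1 → Fin 2, f r = f ![0] + f ![1] := by
  rw [← (Equiv.funUnique (Fin 1) (Fin 2)).symm.sum_comp]
  rw [Fin.sum_univ_two]
  congr 1 <;> congr 1 <;> funext i <;> fin_cases i <;> rfl

lemma CkC2 (a b : ℂ) :
    CkC Pcan 2 (MvPolynomial.C a * (X 1)^2 + MvPolynomial.C b * (X 0)^2)
      (MvPolynomial.C a * (X 1)^2 + MvPolynomial.C b * (X 0)^2) = MvPolynomial.C (-(a*b)) := by
  rw [CkC, sum_fn2]
  rw [sum_fn2, sum_fn2, sum_fn2, sum_fn2]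
  simp [iterD, Pcan, pderiv_two, Complex.I_sq]
  ring_nf
  simp [Complex.I_sq]
  rw [smul_eq_C_mul,
    show (4 : MvPolynomial (Fin 2) ℂ) = MvPolynomial.C 4 from (map_ofNat MvPolynomial.C 4).symm,
    show (2 : MvPolynomial (Fin 2) ℂ) = MvPolynomial.C 2 from (map_ofNat MvPolynomial.C 2).symm,
    ← map_mul, ← map_mul, ← map_mul, ← map_mul]
  congr 1
  ring

lemma CkC0 (u v : MvPolynomial (Fin 2) ℂ) : CkC Pcan 0 u v = u * v := by
  simp [CkC, iterD]

lemma evalCkC1 (a b : ℂ) :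
    MvPolynomial.eval (fun _ => (0:ℂ))
      (CkC Pcan 1 (MvPolynomial.C a * (X 1)^2 + MvPolynomial.C b * (X 0)^2)
        (MvPolynomial.C a * (X 1)^2 + MvPolynomial.C b * (X 0)^2)) = 0 := by
  rw [CkC, sum_fn1, sum_fn1, sum_fn1]
  simp [iterD, Pcan]

/-- The delta functional at the origin is not positive for the Moyal star product:
for `H = p²/(2m) + k q²` with `k, m > 0`, `H` is real with `H(0,0) = 0`, yet
`(H ⋆_M H)(0,0) = −k λ²/(2m)`, which is a negative `λ`-series; so evaluation at the
origin fails the positivity requirement `δ₀(H̄ ⋆ H) ≥ 0`. -/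
theorem delta_not_positive_moyal (mm kk : ℝ) (hm : 0 < mm) (hk : 0 < kk) :
    let H : MvPolynomial (Fin 2) ℂ :=
      MvPolynomial.C (((1 : ℝ) / (2 * mm) : ℝ) : ℂ) * (X 1) ^ 2
        + MvPolynomial.C ((kk : ℝ) : ℂ) * (X 0) ^ 2
    MvPolynomial.map (starRingEnd ℂ) H = H ∧
    MvPolynomial.eval (fun _ => (0 : ℂ)) H = 0 ∧
    PowerSeries.map (MvPolynomial.eval (fun _ => (0 : ℂ)))
        (moyalC Pcan (PowerSeries.C H) (PowerSeries.C H))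
      = PowerSeries.C (R := ℂ) ((-(kk / (2 * mm)) : ℝ) : ℂ) * PowerSeries.X ^ 2 ∧
    ¬ PosSeries (PowerSeries.C (R := ℝ) (-(kk / (2 * mm))) * PowerSeries.X ^ 2) ∧
    PosSeries (PowerSeries.C (R := ℝ) (kk / (2 * mm)) * PowerSeries.X ^ 2) := by
  intro H
  have hm' : (mm : ℝ) ≠ 0 := ne_of_gt hm
  refine ⟨?_, ?_, ?_, ?_, ?_⟩
  · simp [H, Complex.conj_ofReal, map_ofNat]
  · simp [H]
  · ext n
    rw [PowerSeries.coeff_map, coeff_moyal_CC]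
    rw [PowerSeries.coeff_C_mul, PowerSeries.coeff_X_pow]
    match n with
    | 0 => simp [CkC0, H]
    | 1 => simpa using evalCkC1 _ _
    | 2 =>
      simp only [if_pos rfl, mul_one]
      rw [show H = MvPolynomial.C (((1 : ℝ) / (2 * mm) : ℝ) : ℂ) * (X 1) ^ 2
        + MvPolynomial.C ((kk : ℝ) : ℂ) * (X 0) ^ 2 from rfl, CkC2]
      simp only [eval_C]
      push_cast
      field_simp
    | (n+3) =>
      rw [show H = MvPolynomial.C (((1 : ℝ) / (2 * mm) : ℝ) : ℂ) * (X 1) ^ 2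
        + MvPolynomial.C ((kk : ℝ) : ℂ) * (X 0) ^ 2 from rfl, CkC_big _ _ _ _ (by omega)]
      simp [(by omega : ¬ n + 3 = 2)]
  · rintro ⟨n, -, hn⟩
    rw [PowerSeries.coeff_C_mul, PowerSeries.coeff_X_pow] at hn
    by_cases h : n = 2
    · rw [if_pos h, mul_one] at hn
      have : (0:ℝ) < kk / (2*mm) := by positivity
      linarith
    · rw [if_neg h, mul_zero] at hn
      exact lt_irrefl _ hn
  · refine ⟨2, ?_, ?_⟩
    · intro m hmlt
      rw [PowerSeries.coeff_C_mul, PowerSeries.coeff_X_pow, if_neg (by omega), mul_zero]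
    · rw [PowerSeries.coeff_C_mul, PowerSeries.coeff_X_pow, if_pos rfl, mul_one]
      positivity
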